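/- arXiv:1102.2065 — 2 statements merged into one kernel-verified Lean document; each statement's English description precedes it below -/
import Mathlib

section
/- Let S_1 be the eventually periodic sequence in Z/4Z with initial block 01220232 followed by the infinitely repeated period 212113220030232311200232. Then for every integer k ≥ 1 and every element j of Z/4Z, the multiplicity of j among the entries of the Steinhaus triangle ∇S_1[8k] exceeds the multiplicity of j among the entries of ∇S_1[8(k−1)] by exactly 16k − 7. -/
set_option maxRecDepth 40000


/-- Next row of a Steinhaus triangle: pairwise sums of adjacent entries. -/
def nextRow {m : ℕ} (l : List (ZMod m)) : List (ZMod m) :=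
  List.zipWith (· + ·) l l.tail

/-- The rows of the Steinhaus triangle generated by the first row `l`. -/
def triangleRows {m : ℕ} (l : List (ZMod m)) : List (List (ZMod m)) :=
  (List.range l.length).map (fun i => nextRow^[i] l)

/-- All entries of the Steinhaus triangle generated by `l`. -/
def triangleEntries {m : ℕ} (l : List (ZMod m)) : List (ZMod m) :=
  (triangleRows l).flatten

/-- The Steinhaus triangle of `l` is balanced: all elements of `ZMod m`
occur with the same multiplicity among its entries. -/
def IsBalanced {m : ℕ} (l : List (ZMod m)) : Prop :=
  ∀ a b : ZMod m, (triangleEntries l).count a = (triangleEntries l).count b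

/-- The eventually periodic sequence with initial block `I` and period `P`. -/
def evPeriodic {m : ℕ} (I P : List (ZMod m)) : ℕ → ZMod m :=
  fun i => if i < I.length then I.getD i 0 else P.getD ((i - I.length) % P.length) 0

/-- The initial segment of length `l` of the sequence `S`. -/
def seg {m : ℕ} (S : ℕ → ZMod m) (l : ℕ) : List (ZMod m) :=
  (List.range l).map S

def S1 : ℕ → ZMod 4 :=
  evPeriodic ([0,1,2,2,0,2,3,2] : List (ZMod 4)) ([2,1,2,1,1,3,2,2,0,0,3,0,2,3,2,3,1,1,2,0,0,2,3,2] : List (ZMod 4))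

def dS (f : ℕ → ZMod 4) : ℕ → ZMod 4 := fun p => f p + f (p+1)

lemma seg_length (f : ℕ → ZMod 4) (l : ℕ) : (seg f l).length = l := by
  simp [seg]

lemma seg_getElem (f : ℕ → ZMod 4) (l i : ℕ) (h : i < (seg f l).length) :
    (seg f l)[i] = f i := by
  simp [seg]

lemma nextRow_seg (f : ℕ → ZMod 4) (m : ℕ) :
    nextRow (seg f m) = seg (dS f) (m - 1) := by
  apply List.ext_getElem
  · simp [nextRow, seg]
  · intro i h1 h2
    have hi : i < m - 1 := by simpa [seg] using h2
    simp only [nextRow, List.getElem_zipWith, List.getElem_tail]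
    rw [seg_getElem, seg_getElem, seg_getElem]
    rfl

lemma iter_nextRow_seg (i : ℕ) (f : ℕ → ZMod 4) (m : ℕ) :
    nextRow^[i] (seg f m) = seg (dS^[i] f) (m - i) := by
  induction i generalizing f m with
  | zero => simp
  | succ i ih =>
    rw [Function.iterate_succ_apply, nextRow_seg, ih, Function.iterate_succ_apply]
    congr 1
    omega

-- test decide speed
example : nextRow^[16] (seg S1 48) = nextRow^[4] (seg S1 36) := by decide

lemma S1_periodic (p : ℕ) (hp : 8 ≤ p) : S1 (p + 24) = S1 p := by
  have h1 : ¬ (p + 24 < 8) := by omega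
  have h2 : ¬ (p < 8) := by omega
  have h3 : (p + 24 - 8) % 24 = (p - 8) % 24 := by omega
  have hI : ([0,1,2,2,0,2,3,2] : List (ZMod 4)).length = 8 := by decide
  have hP : ([2,1,2,1,1,3,2,2,0,0,3,0,2,3,2,3,1,1,2,0,0,2,3,2] : List (ZMod 4)).length = 24 := by decide
  simp only [S1, evPeriodic, hI, hP]
  rw [if_neg (by omega), if_neg (by omega), h3]

lemma dS_periodic (f : ℕ → ZMod 4) (hf : ∀ p, 8 ≤ p → f (p + 24) = f p) :
    ∀ p, 8 ≤ p → dS f (p + 24) = dS f p := by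
  intro p hp
  have h1 := hf p hp
  have h2 := hf (p + 1) (by omega)
  simp only [dS]
  rw [show p + 24 + 1 = p + 1 + 24 by omega, h1, h2]

lemma SS_periodic (i : ℕ) : ∀ p, 8 ≤ p → dS^[i] S1 (p + 24) = dS^[i] S1 p := by
  induction i with
  | zero => simpa using S1_periodic
  | succ i ih =>
    rw [Function.iterate_succ_apply']
    exact dS_periodic _ ih

lemma fin32 : ∀ p < 32, dS^[16] S1 p = dS^[4] S1 p := by
  have h : nextRow^[16] (seg S1 48) = nextRow^[4] (seg S1 36) := by decide
  rw [iter_nextRow_seg, iter_nextRow_seg, show (48:ℕ) - 16 = 32 from rfl] at h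
  intro p hp
  have hg : (seg (dS^[16] S1) 32).getD p 0 = (seg (dS^[4] S1) 32).getD p 0 := by rw [h]
  have l1 : p < (seg (dS^[16] S1) 32).length := by rw [seg_length]; omega
  have l2 : p < (seg (dS^[4] S1) 32).length := by rw [seg_length]; omega
  rwa [List.getD_eq_getElem _ _ l1, List.getD_eq_getElem _ _ l2, seg_getElem, seg_getElem] at hg

lemma EQ16 : dS^[16] S1 = dS^[4] S1 := by
  funext p
  induction p using Nat.strong_induction_on with
  | _ p ih =>
    by_cases hp : p < 32
    · exact fin32 p hp
    · have h8 : 8 ≤ p - 24 := by omega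
      have e : p = (p - 24) + 24 := by omega
      rw [e, SS_periodic 16 _ h8, SS_periodic 4 _ h8]
      exact ih _ (by omega)

lemma SHIFT12 (i : ℕ) (hi : 4 ≤ i) : dS^[i + 12] S1 = dS^[i] S1 := by
  have e1 : i + 12 = (i - 4) + 16 := by omega
  have e2 : i = (i - 4) + 4 := by omega
  rw [e1, Function.iterate_add_apply, EQ16, ← Function.iterate_add_apply, ← e2]

lemma SHIFT24 (i : ℕ) (hi : 4 ≤ i) : dS^[i + 24] S1 = dS^[i] S1 := by
  have e1 : i + 24 = (i + 12) + 12 := by omega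
  rw [e1, SHIFT12 _ (by omega), SHIFT12 _ hi]

def window (i l : ℕ) : List (ZMod 4) := (List.range 24).map (fun t => dS^[i] S1 (l + t))

lemma rot_count (f : ℕ → ZMod 4) (b m : ℕ) (h : f (m + b) = f m) (j : ZMod 4) :
    ((List.range b).map (fun t => f (m + 1 + t))).count j
      = ((List.range b).map (fun t => f (m + t))).count j := by
  have e1 : (List.range (b + 1)).map (fun t => f (m + t))
      = ((List.range b).map (fun t => f (m + t))) ++ [f (m + b)] := by
    rw [List.range_succ, List.map_append]
    rfl
  have e2 : (List.range (b + 1)).map (fun t => f (m + t))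
      = f m :: (List.range b).map (fun t => f (m + 1 + t)) := by
    rw [List.range_succ_eq_map]
    simp only [List.map_cons, List.map_map]
    congr 1
    apply List.map_congr_left
    intro t _
    simp only [Function.comp_apply]
    congr 1
    omega
  have key : (((List.range b).map (fun t => f (m + t))) ++ [f (m + b)]).count j
      = (f m :: (List.range b).map (fun t => f (m + 1 + t))).count j := by
    rw [← e1, e2]
  simp only [List.count_append, List.count_cons, List.count_nil, h] at key
  omega

lemma rot_sum (g : ℕ → ℕ) (b m : ℕ) (h : g (m + b) = g m) :
    ((List.range b).map (fun t => g (m + 1 + t))).sum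
      = ((List.range b).map (fun t => g (m + t))).sum := by
  have e1 : (List.range (b + 1)).map (fun t => g (m + t))
      = ((List.range b).map (fun t => g (m + t))) ++ [g (m + b)] := by
    rw [List.range_succ, List.map_append]
    rfl
  have e2 : (List.range (b + 1)).map (fun t => g (m + t))
      = g m :: (List.range b).map (fun t => g (m + 1 + t)) := by
    rw [List.range_succ_eq_map]
    simp only [List.map_cons, List.map_map]
    congr 1
    apply List.map_congr_left
    intro t _
    simp only [Function.comp_apply]
    congr 1
    omega
  have key : (((List.range b).map (fun t => g (m + t))) ++ [g (m + b)]).sum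
      = (g m :: (List.range b).map (fun t => g (m + 1 + t))).sum := by
    rw [← e1, e2]
  simp only [List.sum_append, List.sum_cons, List.sum_nil, h] at key
  omega

lemma mapshift_eq_drop (f : ℕ → ZMod 4) (a b : ℕ) :
    (List.range b).map (fun t => f (a + t)) = (seg f (a + b)).drop a := by
  apply List.ext_getElem
  · simp [seg]
  · intro t h1 h2
    rw [List.getElem_drop, seg_getElem]
    simp

lemma window_eval (i l : ℕ) : window i l = (nextRow^[i] (seg S1 (l + 24 + i))).drop l := by
  rw [window, mapshift_eq_drop, iter_nextRow_seg, show l + 24 + i - i = l + 24 by omega]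

lemma Wall (i l : ℕ) (hl : 8 ≤ l) (j : ZMod 4) :
    (window i l).count j = (window i 8).count j := by
  obtain ⟨d, rfl⟩ : ∃ d, l = 8 + d := ⟨l - 8, by omega⟩
  clear hl
  induction d with
  | zero => rfl
  | succ d ih =>
    have h := rot_count (dS^[i] S1) 24 (8 + d) (SS_periodic i (8 + d) (by omega)) j
    rw [show 8 + (d + 1) = 8 + d + 1 by omega]
    simp only [window] at ih ⊢
    rw [h, ih]

lemma w12 (i : ℕ) (hi : 4 ≤ i) (j : ZMod 4) :
    (window (i + 12) 8).count j = (window i 8).count j := by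
  have : dS^[i + 12] S1 = dS^[i] S1 := SHIFT12 i hi
  simp only [window, this]

lemma chunk (m : ℕ) (hm : 4 ≤ m) (j : ZMod 4) :
    ((List.range 12).map (fun t => (window (m + t) 8).count j)).sum = 72 := by
  obtain ⟨d, rfl⟩ : ∃ d, m = 4 + d := ⟨m - 4, by omega⟩
  clear hm
  induction d with
  | zero =>
    simp only [window_eval]
    revert j
    decide
  | succ d ih =>
    have h := rot_sum (fun i => (window i 8).count j) 12 (4 + d)
      (w12 (4 + d) (by omega) j)
    rw [show 4 + (d + 1) = 4 + d + 1 by omega]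
    rw [h, ih]

def wsum (m : ℕ) (j : ZMod 4) : ℕ := ((List.range m).map (fun i => (window i 8).count j)).sum

lemma wsum12 (m : ℕ) (hm : 4 ≤ m) (j : ZMod 4) : wsum (m + 12) j = wsum m j + 72 := by
  rw [wsum, List.range_add, List.map_append, List.sum_append, List.map_map]
  rw [wsum]
  congr 1
  rw [← chunk m hm j]
  congr 1

lemma wsum24 (m : ℕ) (hm : 4 ≤ m) (j : ZMod 4) : wsum (m + 24) j = wsum m j + 144 := by
  rw [show m + 24 = m + 12 + 12 by omega, wsum12 _ (by omega), wsum12 _ hm]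

lemma seg_append (f : ℕ → ZMod 4) (a b : ℕ) :
    seg f (a + b) = seg f a ++ (List.range b).map (fun t => f (a + t)) := by
  rw [seg, List.range_add, List.map_append, List.map_map]
  rfl

def cc (i l : ℕ) (j : ZMod 4) : ℕ := (seg (dS^[i] S1) l).count j

lemma K2 (i l : ℕ) (hl : 8 ≤ l) (j : ZMod 4) :
    cc i (l + 24) j = cc i l j + (window i 8).count j := by
  rw [cc, cc, seg_append, List.count_append, ← Wall i l hl j, window]

lemma sum_map_add' (l : List ℕ) (f g : ℕ → ℕ) :
    (l.map (fun x => f x + g x)).sum = (l.map f).sum + (l.map g).sum := by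
  induction l with
  | nil => rfl
  | cons a l ih => simp [ih]; omega

lemma Tc_eq (n : ℕ) (j : ZMod 4) :
    (triangleEntries (seg S1 n)).count j
      = ((List.range n).map (fun i => cc i (n - i) j)).sum := by
  rw [triangleEntries, triangleRows, List.count_flatten, List.map_map, seg_length]
  congr 1
  apply List.map_congr_left
  intro i hi
  simp only [Function.comp_apply]
  rw [iter_nextRow_seg, cc]

def Aa (n : ℕ) (j : ZMod 4) : ℕ := ((List.range 7).map (fun t => cc (n - 7 + t) (7 - t) j)).sum
def Bb (n : ℕ) (j : ZMod 4) : ℕ := ((List.range 31).map (fun t => cc (n - 7 + t) (31 - t) j)).sum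

lemma STEP (n : ℕ) (hn : 7 ≤ n) (j : ZMod 4) :
    (triangleEntries (seg S1 (n + 24))).count j + Aa n j
      = (triangleEntries (seg S1 n)).count j + wsum (n - 7) j + Bb n j := by
  rw [Tc_eq, Tc_eq]
  have hsplit1 : List.range (n + 24) = List.range (n - 7) ++ (List.range 31).map ((n - 7) + ·) := by
    rw [← List.range_add]
    congr 1
    omega
  have hsplit2 : List.range n = List.range (n - 7) ++ (List.range 7).map ((n - 7) + ·) := by
    rw [← List.range_add]
    congr 1
    omega
  rw [hsplit1, hsplit2, List.map_append, List.map_append, List.sum_append, List.sum_append,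
    List.map_map, List.map_map]
  have t1 : (List.range 31).map ((fun i => cc i (n + 24 - i) j) ∘ ((n - 7) + ·))
      = (List.range 31).map (fun t => cc (n - 7 + t) (31 - t) j) := by
    apply List.map_congr_left
    intro t _
    simp only [Function.comp_apply]
    congr 1
    omega
  have t2 : (List.range 7).map ((fun i => cc i (n - i) j) ∘ ((n - 7) + ·))
      = (List.range 7).map (fun t => cc (n - 7 + t) (7 - t) j) := by
    apply List.map_congr_left
    intro t _
    simp only [Function.comp_apply]
    congr 1
    omega
  have hmain : ((List.range (n - 7)).map (fun i => cc i (n + 24 - i) j)).sum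
      = ((List.range (n - 7)).map (fun i => cc i (n - i) j)).sum + wsum (n - 7) j := by
    have e : (List.range (n - 7)).map (fun i => cc i (n + 24 - i) j)
        = (List.range (n - 7)).map (fun i => cc i (n - i) j + (window i 8).count j) := by
      apply List.map_congr_left
      intro i hi
      have hi' : i < n - 7 := List.mem_range.mp hi
      rw [show n + 24 - i = (n - i) + 24 by omega, K2 i (n - i) (by omega) j]
    rw [e, sum_map_add', wsum]
  rw [t1, t2, hmain, Aa, Bb]
  omega

lemma ccshift (i : ℕ) (hi : 4 ≤ i) (l : ℕ) (j : ZMod 4) : cc (i + 24) l j = cc i l j := by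
  rw [cc, cc, SHIFT24 i hi]

lemma Ashift (n : ℕ) (hn : 11 ≤ n) (j : ZMod 4) : Aa (n + 24) j = Aa n j := by
  rw [Aa, Aa]
  congr 1
  apply List.map_congr_left
  intro t _
  rw [show n + 24 - 7 + t = (n - 7 + t) + 24 by omega, ccshift _ (by omega)]

lemma Bshift (n : ℕ) (hn : 11 ≤ n) (j : ZMod 4) : Bb (n + 24) j = Bb n j := by
  rw [Bb, Bb]
  congr 1
  apply List.map_congr_left
  intro t _
  rw [show n + 24 - 7 + t = (n - 7 + t) + 24 by omega, ccshift _ (by omega)]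

lemma REC : ∀ k, 2 ≤ k → ∀ j : ZMod 4,
    (triangleEntries (seg S1 (8 * k + 24))).count j
      = (triangleEntries (seg S1 (8 * k))).count j + (48 * k + 75) := by
  intro k
  induction k using Nat.strong_induction_on with
  | _ k ih =>
    intro hk j
    by_cases h5 : k < 5
    · interval_cases k <;> revert j <;> decide
    · have e : 8 * k = 8 * (k - 3) + 24 := by omega
      set n := 8 * (k - 3) with hn
      have s1 := STEP n (by omega) j
      have s2 := STEP (n + 24) (by omega) j
      have ha := Ashift n (by omega) j
      have hb := Bshift n (by omega) j
      have hw : wsum (n + 24 - 7) j = wsum (n - 7) j + 144 := by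
        rw [show n + 24 - 7 = (n - 7) + 24 by omega]
        exact wsum24 _ (by omega) j
      have hih := ih (k - 3) (by omega) (by omega) j
      rw [← hn] at hih
      rw [e]
      omega

lemma CLOSED : ∀ k, ∀ j : ZMod 4,
    (triangleEntries (seg S1 (8 * k))).count j = k * (8 * k + 1) := by
  intro k
  induction k using Nat.strong_induction_on with
  | _ k ih =>
    intro j
    by_cases h5 : k < 5
    · interval_cases k <;> revert j <;> decide
    · have hih := ih (k - 3) (by omega) j
      have hrec := REC (k - 3) (by omega) j
      rw [show 8 * (k - 3) + 24 = 8 * k by omega] at hrec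
      rw [hrec, hih]
      have hr := show ((k - 3) + 3) * (8 * ((k - 3) + 3) + 1)
          = (k - 3) * (8 * (k - 3) + 1) + (48 * (k - 3) + 75) by ring
      rw [show (k - 3) + 3 = k by omega] at hr
      omega

theorem stmt14 (k : ℕ) (hk : 1 ≤ k) (j : ZMod 4) :
    (triangleEntries (seg S1 (8 * k))).count j
      = (triangleEntries (seg S1 (8 * (k - 1)))).count j + (16 * k - 7) := by
  rw [CLOSED k j, CLOSED (k - 1) j]
  have hr := show ((k - 1) + 1) * (8 * ((k - 1) + 1) + 1)
      = (k - 1) * (8 * (k - 1) + 1) + (16 * (k - 1) + 9) by ring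
  rw [show (k - 1) + 1 = k by omega] at hr
  omega
end

section
/- Let R_1 = 001(010000100001)^∞ and R_2 = 0011110(001101010110)^∞ be eventually periodic sequences in Z/2Z, and let π : Z/4Z → Z/2Z be the canonical quotient map applied entrywise. Then for every n ≥ 1 there is no sequence U of length n in Z/4Z with π(U) = R_1[n] such that ∇U is strongly balanced, and likewise there is no such strongly balanced lift of any initial segment R_2[n] with n ≥ 1. -/
/-- The Steinhaus triangle of `l` is strongly balanced (with respect to a
given `step`): for every `t` with `step * t ≤ l.length`, the Steinhaus triangle
of the initial segment of `l` of length `l.length - step * t` is balanced. -/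
def IsStronglyBalanced {m : ℕ} (step : ℕ) (l : List (ZMod m)) : Prop :=
  ∀ t : ℕ, step * t ≤ l.length → IsBalanced (l.take (l.length - step * t))

def R1 : ℕ → ZMod 2 :=
  evPeriodic ([0,0,1] : List (ZMod 2)) ([0,1,0,0,0,0,1,0,0,0,0,1] : List (ZMod 2))

def R2 : ℕ → ZMod 2 :=
  evPeriodic ([0,0,1,1,1,1,0] : List (ZMod 2)) ([0,0,1,1,0,1,0,1,0,1,1,0] : List (ZMod 2))

/-- The canonical quotient map `ZMod 4 → ZMod 2`. -/
def π : ZMod 4 →+* ZMod 2 := ZMod.castHom (show (2:ℕ) ∣ 4 by norm_num) (ZMod 2)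


lemma length_nextRow {m : ℕ} (l : List (ZMod m)) : (nextRow l).length = l.length - 1 := by
  simp [nextRow, List.length_zipWith, List.length_tail]

lemma length_iter {m : ℕ} (i : ℕ) (l : List (ZMod m)) :
    (nextRow^[i] l).length = l.length - i := by
  induction i generalizing l with
  | zero => simp
  | succ k ih =>
    rw [Function.iterate_succ_apply, ih, length_nextRow]
    omega

lemma sum_aux : ∀ n : ℕ, 2 * (((List.range n).map (fun i => n - i)).sum) = n * (n + 1) := by
  intro n
  induction n with
  | zero => simp
  | succ k ih =>
    have h : (List.range (k+1)).map (fun i => k + 1 - i)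
        = (k+1) :: (List.range k).map (fun i => k - i) := by
      rw [List.range_succ_eq_map, List.map_cons, List.map_map]
      congr 1
      apply List.map_congr_left
      intro i _
      simp [Function.comp, Nat.succ_sub_succ]
    rw [h, List.sum_cons, Nat.mul_add, ih]
    ring

lemma length_triangleEntries {m : ℕ} (l : List (ZMod m)) :
    2 * (triangleEntries l).length = l.length * (l.length + 1) := by
  rw [triangleEntries, List.length_flatten, triangleRows, List.map_map]
  have : (List.length ∘ fun i => nextRow^[i] l) = fun i => l.length - i := by
    funext i; simp [length_iter]
  rw [this, sum_aux]

lemma length_eq_sum_count {m : ℕ} [NeZero m] (l : List (ZMod m)) :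
    l.length = ∑ a : ZMod m, l.count a := by
  induction l with
  | nil => simp
  | cons x l ih =>
    simp only [List.length_cons, List.count_cons, ih, Finset.sum_add_distrib]
    simp

lemma balanced_dvd {m : ℕ} [NeZero m] {l : List (ZMod m)} (h : IsBalanced l) :
    m ∣ (triangleEntries l).length := by
  have h1 : (triangleEntries l).length = ∑ a : ZMod m, (triangleEntries l).count a :=
    length_eq_sum_count _
  have h2 : ∑ a : ZMod m, (triangleEntries l).count a
      = m * (triangleEntries l).count 0 := by
    rw [Finset.sum_congr rfl (fun a _ => h a 0)]
    simp [Finset.sum_const, ZMod.card]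
  exact ⟨_, h1.trans h2⟩

lemma mod8_of_balanced {l : List (ZMod 4)} (h : IsBalanced l) :
    l.length % 8 = 0 ∨ l.length % 8 = 7 := by
  obtain ⟨c, hc⟩ := balanced_dvd h
  have h2 := length_triangleEntries l
  rw [hc] at h2
  have h8 : l.length * (l.length + 1) = 8 * c := by omega
  set n := l.length with hn
  have hr : n % 8 < 8 := Nat.mod_lt _ (by norm_num)
  have hmod : (n % 8) * ((n % 8) + 1) % 8 = 0 := by
    have : n * (n + 1) % 8 = (n % 8) * ((n % 8) + 1) % 8 := by
      conv_lhs => rw [Nat.mul_mod, Nat.add_mod n 1]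
      simp [Nat.mul_mod]
    rw [← this, h8]
    omega
  interval_cases h : n % 8 <;> omega

def lift0 (a : ZMod 2) : ZMod 4 := if a = 0 then 0 else 1

def lifts : List (ZMod 2) → List (List (ZMod 4))
  | [] => [[]]
  | a :: l => (lifts l).flatMap (fun u => [lift0 a :: u, (lift0 a + 2) :: u])

lemma mem_lifts : ∀ (L : List (ZMod 2)) (U : List (ZMod 4)), U.map π = L → U ∈ lifts L := by
  intro L
  induction L with
  | nil =>
    intro U h
    have : U = [] := by
      cases U with
      | nil => rfl
      | cons x u => simp at h
    simp [this, lifts]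
  | cons a l ih =>
    intro U h
    cases U with
    | nil => simp at h
    | cons x u =>
      simp only [List.map_cons, List.cons.injEq] at h
      obtain ⟨hx, hu⟩ := h
      have hmem := ih u hu
      have hx2 : x = lift0 a ∨ x = lift0 a + 2 := by
        subst hx
        revert x
        decide
      simp only [lifts, List.mem_flatMap]
      exact ⟨u, hmem, by rcases hx2 with h' | h' <;> simp [h']⟩

instance {m : ℕ} [NeZero m] (l : List (ZMod m)) : Decidable (IsBalanced l) := by
  unfold IsBalanced
  infer_instance

set_option maxRecDepth 10000 in
lemma check1_7 : ∀ U ∈ lifts (seg R1 7), ¬ IsBalanced U := by decide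
set_option maxRecDepth 10000 in
lemma check1_8 : ∀ U ∈ lifts (seg R1 8), ¬ IsBalanced U := by decide
set_option maxRecDepth 10000 in
lemma check2_7 : ∀ U ∈ lifts (seg R2 7), ¬ IsBalanced U := by decide
set_option maxRecDepth 10000 in
lemma check2_8 : ∀ U ∈ lifts (seg R2 8), ¬ IsBalanced U := by decide

lemma seg_take {m : ℕ} (R : ℕ → ZMod m) {k n : ℕ} (h : k ≤ n) :
    (seg R n).take k = seg R k := by
  simp [seg, ← List.map_take, List.take_range, Nat.min_eq_left h]

lemma key (R : ℕ → ZMod 2)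
    (h7 : ∀ U ∈ lifts (seg R 7), ¬ IsBalanced U)
    (h8 : ∀ U ∈ lifts (seg R 8), ¬ IsBalanced U) :
    ∀ n : ℕ, 1 ≤ n → ∀ U : List (ZMod 4), U.length = n → U.map π = seg R n →
      ¬ IsStronglyBalanced 8 U := by
  intro n hn U hlen hmap hsb
  have hbal : ∀ t : ℕ, 8 * t ≤ n → IsBalanced (U.take (n - 8 * t)) := by
    intro t ht
    have := hsb t (by rw [hlen]; exact ht)
    rwa [hlen] at this
  have hmapk : ∀ k, k ≤ n → (U.take k).map π = seg R k := by
    intro k hk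
    rw [List.map_take, hmap, seg_take R hk]
  rcases Nat.lt_or_ge (n % 8) 7 with hr | hr
  · rcases Nat.eq_zero_or_pos (n % 8) with h0 | hpos
    · have hb := hbal (n / 8 - 1) (by omega)
      have e : n - 8 * (n / 8 - 1) = 8 := by omega
      rw [e] at hb
      exact h8 _ (mem_lifts _ _ (hmapk 8 (by omega))) hb
    · have hb := hbal (n / 8) (by omega)
      have hl : (U.take (n - 8 * (n / 8))).length = n % 8 := by
        rw [List.length_take, hlen]; omega
      have hm := mod8_of_balanced hb
      rw [hl] at hm
      omega
  · have hr7 : n % 8 = 7 := by omega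
    have hb := hbal (n / 8) (by omega)
    have e : n - 8 * (n / 8) = 7 := by omega
    rw [e] at hb
    exact h7 _ (mem_lifts _ _ (hmapk 7 (by omega))) hb

theorem stmt16 :
    (∀ n : ℕ, 1 ≤ n → ∀ U : List (ZMod 4), U.length = n → U.map π = seg R1 n →
      ¬ IsStronglyBalanced 8 U) ∧
    (∀ n : ℕ, 1 ≤ n → ∀ U : List (ZMod 4), U.length = n → U.map π = seg R2 n →
      ¬ IsStronglyBalanced 8 U) := by
  exact ⟨key R1 check1_7 check1_8, key R2 check2_7 check2_8⟩
end
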